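/- Assume conditions (A1) and (A3), and let g : X → ℝ be bounded and Lipschitz. Let K ⊂ X be a compact set and T ∈ (0,∞). Then for every ε > 0 there exists δ > 0 such that sup_{x∈K} ∫_X ∫_X (g(u) − g(v))² P_{|t−s|}(u,dv) P_{s∧t}(x,du) < ε for all s,t ∈ [0,T] with |s−t| < δ (the double integral equals E_x[(g(Φ_s) − g(Φ_t))²] for the associated Markov process started at x). -/

import Mathlib

open MeasureTheory Filter Set
open scoped ENNReal Topology NNReal

noncomputable section

variable {X : Type*} [MetricSpace X] [CompleteSpace X] [SecondCountableTopology X]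
  [MeasurableSpace X] [BorelSpace X]

/-- Action of a transition kernel family on measures: `ν ↦ ν P_t`. -/
def measAct (P : ℝ → X → Measure X) (t : ℝ) (ν : Measure X) : Measure X :=
  ν.bind (P t)

/-- Dual action of the semigroup on functions: `f ↦ P_t f`. -/
def funAct (P : ℝ → X → Measure X) (t : ℝ) (f : X → ℝ) (x : X) : ℝ :=
  ∫ y, f y ∂(P t x)

/-- A Borel (probability) measure has a finite first moment. -/
def FiniteFirstMoment (ν : Measure X) : Prop :=
  ∀ x₀ : X, Integrable (fun x => dist x₀ x) ν

/-- The Wasserstein (Kantorovich–Rubinstein) distance `d_W`. -/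
def wassDist (μ ν : Measure X) : ℝ :=
  sSup {r | ∃ f : X → ℝ, LipschitzWith 1 f ∧ r = |(∫ x, f x ∂μ) - ∫ x, f x ∂ν|}

/-- A Markov semigroup `{P_t}_{t ≥ 0}` of probability kernels on `X`. -/
structure IsMarkovSemigroup (P : ℝ → X → Measure X) : Prop where
  prob : ∀ t, 0 ≤ t → ∀ x, IsProbabilityMeasure (P t x)
  jointMeas : ∀ A : Set X, MeasurableSet A → Measurable fun p : ℝ × X => P p.1 p.2 A
  init : ∀ x, P 0 x = Measure.dirac x
  chapman : ∀ s t, 0 ≤ s → 0 ≤ t → ∀ x, P (s + t) x = (P s x).bind (P t)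

/-- Condition (A1): stochastic continuity of the semigroup. -/
def CondA1 (P : ℝ → X → Measure X) : Prop :=
  ∀ f : X → ℝ, Continuous f → (∃ C, ∀ x, |f x| ≤ C) →
    ∀ x : X, Tendsto (fun t => funAct P t f x) (𝓝[>] (0 : ℝ)) (𝓝 (f x))

/-- Condition (A2): the Feller property. -/
def CondA2 (P : ℝ → X → Measure X) : Prop :=
  ∀ f : X → ℝ, Continuous f → (∃ C, ∀ x, |f x| ≤ C) → ∀ t, 0 ≤ t →
    Continuous (funAct P t f) ∧ ∃ C, ∀ x, |funAct P t f x| ≤ C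

/-- Condition (A3): preservation of finite first moments and exponential
contractivity in the Wasserstein distance, with rate `γ`. -/
def CondA3 (P : ℝ → X → Measure X) (γ : ℝ) : Prop :=
  (∀ ν : Measure X, IsProbabilityMeasure ν → FiniteFirstMoment ν →
    ∀ t, 0 < t → FiniteFirstMoment (measAct P t ν)) ∧
  0 < γ ∧
  ∀ t, 0 ≤ t → ∀ x y : X,
    wassDist (P t x) (P t y) ≤ Real.exp (-γ * t) * dist x y

/-- Condition (A4): a uniform-in-time moment bound of order `ζ > 2` for the initial
distribution `μ`, along the semigroup. -/
def CondA4 (P : ℝ → X → Measure X) (μ : Measure X) (x₀ : X) (ζ : ℝ) : Prop :=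
  2 < ζ ∧ ∃ M : ℝ, ∀ t, 0 ≤ t →
    (∫⁻ x, ENNReal.ofReal (dist x₀ x ^ ζ) ∂(measAct P t μ)) ≤ ENNReal.ofReal M

variable {Ω : Type*} [MeasurableSpace Ω]

/-- The natural filtration of the process `Φ`. -/
def natFiltration (Φ : ℝ → Ω → X) (s : ℝ) : MeasurableSpace Ω :=
  ⨆ u ∈ Set.Icc (0 : ℝ) s, MeasurableSpace.comap (Φ u) inferInstance

/-- A (progressively measurable) time-homogeneous Markov process with state space `X`,
transition semigroup `P` and initial distribution `μ`, realized on `(Ω, ℙ)`. -/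
structure IsMarkovProcess (P : ℝ → X → Measure X) (Φ : ℝ → Ω → X)
    (ℙ : Measure Ω) (μ : Measure X) : Prop where
  jointMeas : Measurable fun p : ℝ × Ω => Φ p.1 p.2
  init : ℙ.map (Φ 0) = μ
  law : ∀ t, 0 ≤ t → ℙ.map (Φ t) = measAct P t μ
  markov : ∀ f : X → ℝ, Measurable f → (∃ C, ∀ x, |f x| ≤ C) →
    ∀ s t : ℝ, 0 ≤ s → 0 ≤ t →
      (fun ω => funAct P t f (Φ s ω)) =ᵐ[ℙ]
        ℙ[(fun ω => f (Φ (s + t) ω)) | natFiltration Φ s]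

/-- A Markov process together with a measurable family of laws `{ℙ_x}_{x ∈ X}`,
with `ℙ_x(Φ_0 = x) = 1`. -/
structure IsMarkovFamily (P : ℝ → X → Measure X) (Φ : ℝ → Ω → X)
    (ℙ : X → Measure Ω) : Prop where
  prob : ∀ x, IsProbabilityMeasure (ℙ x)
  jointMeas : Measurable fun p : ℝ × Ω => Φ p.1 p.2
  measFam : ∀ s : Set Ω, MeasurableSet s → Measurable fun x => ℙ x s
  start : ∀ x, (ℙ x) {ω | Φ 0 ω = x} = 1
  law : ∀ x, ∀ t, 0 ≤ t → (ℙ x).map (Φ t) = P t x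
  markov : ∀ x : X, ∀ f : X → ℝ, Measurable f → (∃ C, ∀ z, |f z| ≤ C) →
    ∀ s t : ℝ, 0 ≤ s → 0 ≤ t →
      (fun ω => funAct P t f (Φ s ω)) =ᵐ[ℙ x]
        (ℙ x)[(fun ω => f (Φ (s + t) ω)) | natFiltration Φ s]

/-- The corrector function `χ_g(x) = ∫_0^∞ (P_t g)(x) dt`. -/
def corrector (P : ℝ → X → Measure X) (g : X → ℝ) (x : X) : ℝ :=
  ∫ t in Set.Ioi (0 : ℝ), funAct P t g x

/-- The additive functional `I_t(g) = ∫_0^t g(Φ_s) ds`. -/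
def addFun (g : X → ℝ) (Φ : ℝ → Ω → X) (t : ℝ) (ω : Ω) : ℝ :=
  ∫ s in (0 : ℝ)..t, g (Φ s ω)

/-- The martingale part `M_t(g) = χ_g(Φ_t) - χ_g(Φ_0) + I_t(g)`. -/
def mart (P : ℝ → X → Measure X) (g : X → ℝ) (Φ : ℝ → Ω → X) (t : ℝ) (ω : Ω) : ℝ :=
  corrector P g (Φ t ω) - corrector P g (Φ 0 ω) + addFun g Φ t ω

/-- The martingale increments `Z_n(g) = M_n(g) - M_{n-1}(g)`. -/
def incr (P : ℝ → X → Measure X) (g : X → ℝ) (Φ : ℝ → Ω → X) (n : ℕ) (ω : Ω) : ℝ :=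
  mart P g Φ (n : ℝ) ω - mart P g Φ ((n : ℝ) - 1) ω

/-- Truncation `a ∧ p` for `p ∈ ℕ ∪ {∞}`, with the convention `a ∧ ∞ = a`. -/
def truncMin (a : ℝ) (p : ℕ∞) : ℝ :=
  if p = ⊤ then a else min a (p.toNat : ℝ)

section AuxLemmas
set_option linter.unusedSectionVars false
set_option maxHeartbeats 1000000

variable {P : ℝ → X → Measure X} {γ : ℝ}

/-- Measurability of the kernel `P t` as a measure-valued map. -/
lemma measP (hP : IsMarkovSemigroup P) (t : ℝ) : Measurable (P t) := by
  apply Measure.measurable_of_measurable_coe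
  intro A hA
  exact (hP.jointMeas A hA).comp (measurable_const.prodMk measurable_id)

/-- Bounded a.e.-strongly-measurable functions are integrable w.r.t. finite measures. -/
lemma integrable_of_bdd {μ : Measure X} [IsFiniteMeasure μ] {f : X → ℝ}
    (hm : AEStronglyMeasurable f μ) (c : ℝ) (h : ∀ x, |f x| ≤ c) : Integrable f μ :=
  ⟨hm, HasFiniteIntegral.of_bounded (C := c) (ae_of_all _ (by simpa [Real.norm_eq_abs] using h))⟩

/-- 1-Lipschitz functions are integrable w.r.t. measures with finite first moment. -/
lemma lip_integrable {μ : Measure X} [IsFiniteMeasure μ] (hμ : FiniteFirstMoment μ)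
    (x₀ : X) {f : X → ℝ} (hf : LipschitzWith 1 f) : Integrable f μ := by
  refine Integrable.mono' ((integrable_const (|f x₀|)).add (hμ x₀))
    hf.continuous.aestronglyMeasurable (ae_of_all _ fun z => ?_)
  have h1 : |f z - f x₀| ≤ dist x₀ z := by
    have := hf.dist_le_mul z x₀
    rw [Real.dist_eq] at this
    simpa [dist_comm] using this
  calc ‖f z‖ = |f z - f x₀ + f x₀| := by rw [Real.norm_eq_abs]; ring_nf
    _ ≤ |f z - f x₀| + |f x₀| := abs_add_le _ _
    _ ≤ dist x₀ z + |f x₀| := by linarith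
    _ = |f x₀| + dist x₀ z := by ring

/-- Every `P t x`, `t ≥ 0`, has a finite first moment. -/
lemma ffm (hP : IsMarkovSemigroup P) (hA3 : CondA3 P γ) {t : ℝ} (ht : 0 ≤ t) (x : X) :
    FiniteFirstMoment (P t x) := by
  have hdir : FiniteFirstMoment (Measure.dirac x : Measure X) := by
    intro x₀
    refine ⟨(continuous_const.dist continuous_id).aestronglyMeasurable, ?_⟩
    rw [HasFiniteIntegral, lintegral_dirac]
    exact ENNReal.coe_lt_top
  rcases eq_or_lt_of_le ht with h | h
  · rw [← h, hP.init]; exact hdir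
  · have := hA3.1 (Measure.dirac x) (by infer_instance) hdir t h
    rwa [measAct, Measure.dirac_bind (measP hP t)] at this

/-- The Kantorovich–Rubinstein inequality extracted from (A3). -/
lemma kantorovich (hP : IsMarkovSemigroup P) (hA3 : CondA3 P γ) {t : ℝ} (ht : 0 ≤ t)
    (x y : X) {f : X → ℝ} (hf : LipschitzWith 1 f) :
    |(∫ z, f z ∂(P t x)) - ∫ z, f z ∂(P t y)| ≤ Real.exp (-γ * t) * dist x y := by
  haveI := hP.prob t ht x
  haveI := hP.prob t ht y
  have hb : BddAbove {r | ∃ f : X → ℝ, LipschitzWith 1 f ∧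
      r = |(∫ z, f z ∂(P t x)) - ∫ z, f z ∂(P t y)|} := by
    refine ⟨(∫ z, dist x z ∂(P t x)) + ∫ z, dist x z ∂(P t y), ?_⟩
    rintro r ⟨f', hf', rfl⟩
    have hix : Integrable f' (P t x) := lip_integrable (ffm hP hA3 ht x) x hf'
    have hiy : Integrable f' (P t y) := lip_integrable (ffm hP hA3 ht y) x hf'
    have key : ∀ (μ : Measure X), IsProbabilityMeasure μ → Integrable f' μ →
        Integrable (fun z => dist x z) μ →
        |(∫ z, f' z ∂μ) - f' x| ≤ ∫ z, dist x z ∂μ := by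
      intro μ hμ hi hd
      have h1 : (∫ z, f' z ∂μ) - f' x = ∫ z, f' z - f' x ∂μ := by
        rw [integral_sub hi (integrable_const _), integral_const]
        simp [measure_univ]
      rw [h1]
      calc |∫ z, f' z - f' x ∂μ| ≤ ∫ z, |f' z - f' x| ∂μ := by
            simpa [Real.norm_eq_abs] using norm_integral_le_integral_norm (fun z => f' z - f' x)
        _ ≤ ∫ z, dist x z ∂μ := by
            refine integral_mono (hi.sub (integrable_const _)).abs hd fun z => ?_
            have := hf'.dist_le_mul z x
            rw [Real.dist_eq] at this
            simpa [dist_comm] using this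
    have hx := key (P t x) (hP.prob t ht x) hix (ffm hP hA3 ht x x)
    have hy := key (P t y) (hP.prob t ht y) hiy (ffm hP hA3 ht y x)
    calc |(∫ z, f' z ∂(P t x)) - ∫ z, f' z ∂(P t y)|
        = |((∫ z, f' z ∂(P t x)) - f' x) - ((∫ z, f' z ∂(P t y)) - f' x)| := by ring_nf
      _ ≤ |(∫ z, f' z ∂(P t x)) - f' x| + |(∫ z, f' z ∂(P t y)) - f' x| := abs_sub _ _
      _ ≤ (∫ z, dist x z ∂(P t x)) + ∫ z, dist x z ∂(P t y) := add_le_add hx hy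
  calc |(∫ z, f z ∂(P t x)) - ∫ z, f z ∂(P t y)|
      ≤ wassDist (P t x) (P t y) := le_csSup hb ⟨f, hf, rfl⟩
    _ ≤ Real.exp (-γ * t) * dist x y := hA3.2.2 t ht x y


/-- `ψ r u = ∫ min(d(u,v),1) P_r(u,dv)`. -/
def psiAux (P : ℝ → X → Measure X) (r : ℝ) (u : X) : ℝ :=
  ∫ v, min (dist u v) 1 ∂(P r u)

lemma lip_min_dist (u : X) : LipschitzWith 1 (fun v => min (dist u v) 1) :=
  (LipschitzWith.dist_right u).min_const 1

lemma min_dist_nonneg (u v : X) : 0 ≤ min (dist u v) 1 :=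
  le_min dist_nonneg zero_le_one

lemma min_dist_abs_le_one (u v : X) : |min (dist u v) 1| ≤ 1 := by
  rw [abs_of_nonneg (min_dist_nonneg u v)]; exact min_le_right _ _

lemma integrable_min_dist {μ : Measure X} [IsFiniteMeasure μ] (u : X) :
    Integrable (fun v => min (dist u v) 1) μ :=
  integrable_of_bdd (lip_min_dist u).continuous.aestronglyMeasurable 1 (min_dist_abs_le_one u)

lemma psi_nonneg (hP : IsMarkovSemigroup P) {r : ℝ} (hr : 0 ≤ r) (u : X) :
    0 ≤ psiAux P r u :=
  integral_nonneg fun v => min_dist_nonneg u v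

lemma psi_le_one (hP : IsMarkovSemigroup P) {r : ℝ} (hr : 0 ≤ r) (u : X) :
    psiAux P r u ≤ 1 := by
  haveI := hP.prob r hr u
  calc psiAux P r u ≤ ∫ _, (1 : ℝ) ∂(P r u) :=
        integral_mono (integrable_min_dist u) (integrable_const 1)
          (fun v => min_le_right _ _)
    _ = 1 := by simp

lemma psi_zero (hP : IsMarkovSemigroup P) (u : X) : psiAux P 0 u = 0 := by
  rw [psiAux, hP.init, integral_dirac]
  simp

lemma psi_lip (hP : IsMarkovSemigroup P) (hA3 : CondA3 P γ) {r : ℝ} (hr : 0 ≤ r)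
    (u u' : X) : |psiAux P r u - psiAux P r u'| ≤ 2 * dist u u' := by
  haveI := hP.prob r hr u
  haveI := hP.prob r hr u'
  have h1 : |(∫ v, min (dist u v) 1 ∂(P r u)) - ∫ v, min (dist u v) 1 ∂(P r u')|
      ≤ dist u u' := by
    refine le_trans (kantorovich hP hA3 hr u u' (lip_min_dist u)) ?_
    have : Real.exp (-γ * r) ≤ 1 := by
      apply Real.exp_le_one_iff.mpr
      have := hA3.2.1
      nlinarith
    nlinarith [dist_nonneg (x := u) (y := u')]
  have h2 : |(∫ v, min (dist u v) 1 ∂(P r u')) - ∫ v, min (dist u' v) 1 ∂(P r u')|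
      ≤ dist u u' := by
    rw [← integral_sub (integrable_min_dist u) (integrable_min_dist u')]
    calc |∫ v, (min (dist u v) 1 - min (dist u' v) 1) ∂(P r u')|
        ≤ ∫ v, |min (dist u v) 1 - min (dist u' v) 1| ∂(P r u') := by
          simpa [Real.norm_eq_abs] using
            norm_integral_le_integral_norm (fun v => min (dist u v) 1 - min (dist u' v) 1)
      _ ≤ ∫ _, dist u u' ∂(P r u') := by
          refine integral_mono ((integrable_min_dist u).sub (integrable_min_dist u')).abs
            (integrable_const _) fun v => ?_
          have h3 : |min (dist u v) 1 - min (dist u' v) 1|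
              ≤ max |dist u v - dist u' v| |(1:ℝ) - 1| := abs_min_sub_min_le_max _ _ _ _
          rw [sub_self, abs_zero, max_eq_left (abs_nonneg _)] at h3
          exact h3.trans (abs_dist_sub_le u u' v)
      _ = dist u u' := by simp
  calc |psiAux P r u - psiAux P r u'|
      ≤ |(∫ v, min (dist u v) 1 ∂(P r u)) - ∫ v, min (dist u v) 1 ∂(P r u')| +
        |(∫ v, min (dist u v) 1 ∂(P r u')) - ∫ v, min (dist u' v) 1 ∂(P r u')| := by
        rw [psiAux, psiAux]
        exact abs_sub_le _ _ _
    _ ≤ 2 * dist u u' := by linarith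

lemma psi_cont (hP : IsMarkovSemigroup P) (hA3 : CondA3 P γ) {r : ℝ} (hr : 0 ≤ r) :
    Continuous (psiAux P r) := by
  have : LipschitzWith 2 (psiAux P r) := by
    apply LipschitzWith.of_dist_le_mul
    intro u u'
    rw [Real.dist_eq]
    simpa using psi_lip hP hA3 hr u u'
  exact this.continuous

lemma psi_half_lip (hP : IsMarkovSemigroup P) (hA3 : CondA3 P γ) {r : ℝ} (hr : 0 ≤ r) :
    LipschitzWith 1 (fun u => psiAux P r u / 2) := by
  apply LipschitzWith.of_dist_le_mul
  intro u u'
  rw [Real.dist_eq, NNReal.coe_one, one_mul]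
  have := psi_lip hP hA3 hr u u'
  rw [div_sub_div_same, abs_div]
  rw [abs_of_nonneg (by norm_num : (0:ℝ) ≤ 2)]
  linarith

lemma psi_tendsto (hA1 : CondA1 P) (u : X) :
    Tendsto (fun r => psiAux P r u) (𝓝[>] (0 : ℝ)) (𝓝 0) := by
  have := hA1 (fun v => min (dist u v) 1) (lip_min_dist u).continuous
    ⟨1, min_dist_abs_le_one u⟩ u
  simpa [funAct, psiAux, dist_self] using this

/-- Bochner integral against a bound measure, for nonnegative bounded measurable
integrands. -/
lemma integral_bind_nn (hP : IsMarkovSemigroup P) {a : ℝ} (ha : 0 ≤ a)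
    (ν : Measure X) [IsProbabilityMeasure ν] {f : X → ℝ} (hfm : Measurable f)
    (hf0 : ∀ z, 0 ≤ f z) (c : ℝ) (hfc : ∀ z, f z ≤ c) :
    ∫ z, f z ∂(ν.bind (P a)) = ∫ y, (∫ z, f z ∂(P a y)) ∂ν := by
  have hmf : Measurable fun z => ENNReal.ofReal (f z) := ENNReal.measurable_ofReal.comp hfm
  have hG : Measurable fun y => ∫⁻ z, ENNReal.ofReal (f z) ∂(P a y) :=
    (Measure.measurable_lintegral hmf).comp (measP hP a)
  have hGb : ∀ y, (∫⁻ z, ENNReal.ofReal (f z) ∂(P a y)) ≤ ENNReal.ofReal c := by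
    intro y
    haveI := hP.prob a ha y
    calc (∫⁻ z, ENNReal.ofReal (f z) ∂(P a y)) ≤ ∫⁻ _, ENNReal.ofReal c ∂(P a y) :=
          lintegral_mono fun z => ENNReal.ofReal_le_ofReal (hfc z)
      _ = ENNReal.ofReal c := by simp
  have h1 : ∫ z, f z ∂(ν.bind (P a))
      = ((∫⁻ z, ENNReal.ofReal (f z) ∂(ν.bind (P a)))).toReal :=
    integral_eq_lintegral_of_nonneg_ae (ae_of_all _ hf0) hfm.aestronglyMeasurable
  rw [h1, Measure.lintegral_bind (measP hP a).aemeasurable hmf.aemeasurable]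
  rw [← integral_toReal (hG.aemeasurable) (ae_of_all _ fun y =>
    lt_of_le_of_lt (hGb y) ENNReal.ofReal_lt_top)]
  refine integral_congr_ae (ae_of_all _ fun y => ?_)
  exact (integral_eq_lintegral_of_nonneg_ae (ae_of_all _ hf0) hfm.aestronglyMeasurable).symm

/-- `w x s r = ∫ ψ(r,·) dP_s(x,·)`. -/
def wAux (P : ℝ → X → Measure X) (x : X) (s r : ℝ) : ℝ :=
  ∫ u, psiAux P r u ∂(P s x)

lemma integrable_psi (hP : IsMarkovSemigroup P) (hA3 : CondA3 P γ) {r : ℝ} (hr : 0 ≤ r)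
    {μ : Measure X} [IsFiniteMeasure μ] : Integrable (psiAux P r) μ :=
  integrable_of_bdd (psi_cont hP hA3 hr).aestronglyMeasurable 1
    (fun u => by rw [abs_of_nonneg (psi_nonneg hP hr u)]; exact psi_le_one hP hr u)

lemma w_tendsto (hP : IsMarkovSemigroup P) (hA1 : CondA1 P) (hA3 : CondA3 P γ)
    (x : X) {b : ℝ} (hb : 0 ≤ b) :
    Tendsto (fun r => wAux P x b r) (𝓝[>] (0 : ℝ)) (𝓝 0) := by
  haveI := hP.prob b hb x
  have H := tendsto_integral_filter_of_dominated_convergence (μ := P b x)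
    (l := 𝓝[>] (0:ℝ)) (F := fun r u => psiAux P r u) (f := fun _ => (0:ℝ))
    (bound := fun _ => (1:ℝ))
    (by
      filter_upwards [self_mem_nhdsWithin] with r (hr : 0 < r)
      exact (psi_cont hP hA3 hr.le).aestronglyMeasurable)
    (by
      filter_upwards [self_mem_nhdsWithin] with r (hr : 0 < r)
      refine ae_of_all _ fun u => ?_
      rw [Real.norm_eq_abs, abs_of_nonneg (psi_nonneg hP hr.le u)]
      exact psi_le_one hP hr.le u)
    (integrable_const 1)
    (ae_of_all _ fun u => psi_tendsto hA1 u)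
  simpa [wAux] using H

lemma w_nonneg (hP : IsMarkovSemigroup P) {s r : ℝ} (hr : 0 ≤ r) (x : X) :
    0 ≤ wAux P x s r :=
  integral_nonneg fun u => psi_nonneg hP hr u

lemma w_xlip (hP : IsMarkovSemigroup P) (hA3 : CondA3 P γ) {s r : ℝ} (hs : 0 ≤ s)
    (hr : 0 ≤ r) (x y : X) : |wAux P x s r - wAux P y s r| ≤ 2 * dist x y := by
  haveI := hP.prob s hs x
  haveI := hP.prob s hs y
  have hk := kantorovich hP hA3 hs x y (psi_half_lip hP hA3 hr)
  have hx : (∫ u, psiAux P r u / 2 ∂(P s x)) = wAux P x s r / 2 := by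
    rw [wAux, integral_div]
  have hy : (∫ u, psiAux P r u / 2 ∂(P s y)) = wAux P y s r / 2 := by
    rw [wAux, integral_div]
  rw [hx, hy, div_sub_div_same, abs_div, abs_of_nonneg (by norm_num : (0:ℝ) ≤ 2)] at hk
  have hexp : Real.exp (-γ * s) ≤ 1 := by
    apply Real.exp_le_one_iff.mpr
    have := hA3.2.1
    nlinarith
  nlinarith [dist_nonneg (x := x) (y := y)]

lemma w_shift (hP : IsMarkovSemigroup P) (hA3 : CondA3 P γ) (x : X) {a e r : ℝ}
    (ha : 0 ≤ a) (he : 0 ≤ e) (hr : 0 ≤ r) :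
    |wAux P x (e + a) r - wAux P x a r| ≤ 2 * psiAux P e x := by
  haveI := hP.prob e he x
  haveI := hP.prob a ha x
  set Φ : X → ℝ := fun y => wAux P y a r with hΦ
  have hbind : wAux P x (e + a) r = ∫ y, Φ y ∂(P e x) := by
    rw [wAux, hP.chapman e a he ha x]
    exact integral_bind_nn hP ha (P e x) (psi_cont hP hA3 hr).measurable
      (psi_nonneg hP hr) 1 (psi_le_one hP hr)
  have hΦ01 : ∀ y, 0 ≤ Φ y ∧ Φ y ≤ 1 := by
    intro y
    haveI := hP.prob a ha y
    constructor
    · exact w_nonneg hP hr y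
    · calc Φ y ≤ ∫ _, (1:ℝ) ∂(P a y) :=
          integral_mono (integrable_psi hP hA3 hr) (integrable_const 1)
            (fun u => psi_le_one hP hr u)
        _ = 1 := by simp
  have hΦlip : ∀ y y', |Φ y - Φ y'| ≤ 2 * dist y y' := fun y y' =>
    w_xlip hP hA3 ha hr y y'
  have hkey : ∀ y, |Φ y - Φ x| ≤ 2 * min (dist x y) 1 := by
    intro y
    rcases le_total (dist x y) 1 with h | h
    · rw [min_eq_left h]
      calc |Φ y - Φ x| ≤ 2 * dist y x := hΦlip y x
        _ = 2 * dist x y := by rw [dist_comm]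
    · rw [min_eq_right h]
      have h1 := (hΦ01 y).1; have h2 := (hΦ01 y).2
      have h3 := (hΦ01 x).1; have h4 := (hΦ01 x).2
      rw [abs_le]; constructor <;> linarith
  have hΦmeas : Continuous Φ := by
    have : LipschitzWith 2 Φ := by
      apply LipschitzWith.of_dist_le_mul
      intro y y'
      rw [Real.dist_eq]
      simpa using hΦlip y y'
    exact this.continuous
  have hΦint : Integrable Φ (P e x) :=
    integrable_of_bdd hΦmeas.aestronglyMeasurable 1
      (fun y => by rw [abs_of_nonneg (hΦ01 y).1]; exact (hΦ01 y).2)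
  have hconst : wAux P x a r = ∫ _, Φ x ∂(P e x) := by
    rw [integral_const]; simp [measure_univ, hΦ]
  rw [hbind, hconst, ← integral_sub hΦint (integrable_const _)]
  calc |∫ y, Φ y - Φ x ∂(P e x)| ≤ ∫ y, |Φ y - Φ x| ∂(P e x) := by
        simpa [Real.norm_eq_abs] using norm_integral_le_integral_norm (fun y => Φ y - Φ x)
    _ ≤ ∫ y, 2 * min (dist x y) 1 ∂(P e x) := by
        refine integral_mono (hΦint.sub (integrable_const _)).abs
          ((integrable_min_dist x).const_mul 2) fun y => hkey y
    _ = 2 * psiAux P e x := by rw [psiAux, integral_const_mul]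

/-- Uniform smallness of `w` over `[0,T] × K` as `r → 0⁺`. -/
lemma w_uniform_small (hP : IsMarkovSemigroup P) (hA1 : CondA1 P) (hA3 : CondA3 P γ)
    {K : Set X} (hK : IsCompact K) {T : ℝ} (hT : 0 < T) {ε : ℝ} (hε : 0 < ε) :
    ∃ δ > 0, ∀ r : ℝ, 0 < r → r < δ → ∀ s ∈ Set.Icc (0:ℝ) T, ∀ x ∈ K,
      wAux P x s r < ε := by
  -- single-point estimate
  have point : ∀ y : X, ∃ δ > 0, ∀ r : ℝ, 0 < r → r < δ → ∀ s ∈ Set.Icc (0:ℝ) T,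
      wAux P y s r < 3 * ε / 4 := by
    intro y
    -- choose η with ψ(e,y) < ε/8 for 0 < e < η
    obtain ⟨η, hη0, hηsmall⟩ : ∃ η > 0, ∀ e : ℝ, 0 < e → e < η → psiAux P e y < ε / 8 := by
      have hev : ∀ᶠ e in 𝓝[>] (0:ℝ), psiAux P e y < ε / 8 :=
        (psi_tendsto (P := P) hA1 y).eventually_lt_const (by positivity)
      obtain ⟨u, hu, hsub⟩ := mem_nhdsGT_iff_exists_Ioo_subset.mp hev
      exact ⟨u, hu, fun e he0 heu => hsub ⟨he0, heu⟩⟩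
    obtain ⟨N, hN⟩ := exists_nat_gt (T / η)
    have hN0 : 0 < (N:ℝ) := lt_trans (by positivity) hN
    set τ : ℝ := T / N with hτ
    have hτ0 : 0 < τ := by positivity
    have hτη : τ < η := by
      rw [hτ, div_lt_iff₀ hN0]
      have := (div_lt_iff₀ hη0).mp hN
      nlinarith
    -- δ for each grid point
    have grid : ∀ i : ℕ, ∃ δ > 0, ∀ r : ℝ, 0 < r → r < δ →
        wAux P y (i * τ) r < ε / 2 := by
      intro i
      have hb : 0 ≤ (i:ℝ) * τ := by positivity
      have hev : ∀ᶠ r in 𝓝[>] (0:ℝ), wAux P y ((i:ℝ) * τ) r < ε / 2 :=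
        (w_tendsto hP hA1 hA3 y hb).eventually_lt_const (by positivity)
      obtain ⟨u, hu, hsub⟩ := mem_nhdsGT_iff_exists_Ioo_subset.mp hev
      exact ⟨u, hu, fun r hr0 hru => hsub ⟨hr0, hru⟩⟩
    choose δf hδf0 hδf using grid
    refine ⟨(Finset.range (N+1)).inf' ⟨0, Finset.mem_range.mpr (Nat.succ_pos N)⟩ δf, ?_, ?_⟩
    · exact (Finset.lt_inf'_iff _).mpr fun i _ => hδf0 i
    · intro r hr0 hrδ s hs
      set i : ℕ := ⌊s / τ⌋₊ with hi
      have hs0 : 0 ≤ s := hs.1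
      have hsT : s ≤ T := hs.2
      have hb_le : (i:ℝ) * τ ≤ s := by
        rw [hi]
        have := Nat.floor_le (by positivity : 0 ≤ s / τ)
        calc ((⌊s / τ⌋₊ : ℝ)) * τ ≤ (s / τ) * τ := by nlinarith
          _ = s := by field_simp
      have hs_lt : s < (i:ℝ) * τ + τ := by
        have := Nat.lt_succ_floor ⌊s / τ⌋₊
        have h2 : s / τ < (⌊s / τ⌋₊ : ℝ) + 1 := Nat.lt_floor_add_one _
        calc s = (s / τ) * τ := by field_simp
          _ < ((i:ℝ) + 1) * τ := by rw [hi]; nlinarith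
          _ = (i:ℝ) * τ + τ := by ring
      have hiN : i ∈ Finset.range (N+1) := by
        rw [Finset.mem_range, Nat.lt_succ_iff, hi]
        have hNτ : (N:ℝ) * τ = T := by rw [hτ]; field_simp
        have h1 : s / τ ≤ (N:ℝ) := by
          rw [div_le_iff₀ hτ0, hNτ]; exact hsT
        calc ⌊s / τ⌋₊ ≤ ⌊(N:ℝ)⌋₊ := Nat.floor_le_floor h1
          _ = N := Nat.floor_natCast N
      have hrδi : r < δf i := lt_of_lt_of_le hrδ (Finset.inf'_le δf hiN)
      have hgrid := hδf i r hr0 hrδi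
      -- shift from the grid point
      set e : ℝ := s - (i:ℝ) * τ with he
      have he0 : 0 ≤ e := by rw [he]; linarith
      have heτ : e < τ := by rw [he]; linarith
      have hshift := w_shift hP hA3 y (by positivity : 0 ≤ (i:ℝ) * τ) he0 hr0.le
      rw [show e + (i:ℝ) * τ = s by rw [he]; ring] at hshift
      have hψe : psiAux P e y ≤ ε / 8 := by
        rcases eq_or_lt_of_le he0 with h | h
        · rw [← h, psi_zero hP]; positivity
        · exact (hηsmall e h (lt_trans heτ hτη)).le
      have habs := (abs_le.mp hshift).2
      linarith
  -- compactness in x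
  rcases K.eq_empty_or_nonempty with hKe | hKne
  · exact ⟨1, one_pos, fun r _ _ s _ x hx => by rw [hKe] at hx; exact absurd hx (notMem_empty x)⟩
  obtain ⟨F, hFfin, hFcov⟩ := (Metric.totallyBounded_iff.mp hK.totallyBounded) (ε/8)
    (by positivity)
  choose δg hδg0 hδg using fun y : X => point y
  have hFne : ∃ y, y ∈ F := by
    obtain ⟨x, hx⟩ := hKne
    obtain ⟨y, hy, _⟩ := mem_iUnion₂.mp (hFcov hx)
    exact ⟨y, hy⟩
  set Ffin := hFfin.toFinset with hFf
  have hFfne : Ffin.Nonempty := by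
    obtain ⟨y, hy⟩ := hFne
    exact ⟨y, hFfin.mem_toFinset.mpr hy⟩
  refine ⟨Ffin.inf' hFfne δg, ?_, ?_⟩
  · exact (Finset.lt_inf'_iff _).mpr fun y _ => hδg0 y
  · intro r hr0 hrδ s hs x hx
    obtain ⟨y, hy, hxy⟩ := mem_iUnion₂.mp (hFcov hx)
    have hxy' : dist x y < ε / 8 := Metric.mem_ball.mp hxy
    have hrδy : r < δg y :=
      lt_of_lt_of_le hrδ (Finset.inf'_le δg (hFfin.mem_toFinset.mpr hy))
    have h1 := hδg y r hr0 hrδy s hs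
    have h2 := w_xlip hP hA3 hs.1 hr0.le x y
    have := (abs_le.mp h2).2
    linarith

/-- Pointwise bound `(g u - g v)² ≤ L · min(d(u,v),1)` for bounded Lipschitz `g`. -/
lemma sq_le_min_bound {g : X → ℝ} {Kg : ℝ≥0} (hLip : LipschitzWith Kg g) {C : ℝ}
    (hC0 : 0 ≤ C) (hC : ∀ z, |g z| ≤ C) (u v : X) :
    (g u - g v) ^ 2 ≤ (2 * C * max (Kg : ℝ) (2 * C) + 1) * min (dist u v) 1 := by
  set a : ℝ := |g u - g v| with ha
  have ha1 : a ≤ 2 * C := by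
    have h1 := hC u; have h2 := hC v
    rw [ha]; rw [abs_le]; constructor <;> [linarith [(abs_le.mp h1).1, (abs_le.mp h2).2];
      linarith [(abs_le.mp h1).2, (abs_le.mp h2).1]]
  have ha2 : a ≤ (Kg : ℝ) * dist u v := by
    have := hLip.dist_le_mul u v
    rwa [Real.dist_eq] at this
  have hsq : (g u - g v) ^ 2 = a * a := by rw [ha, ← abs_mul, abs_of_nonneg] <;> nlinarith
  have hmin : a ≤ max (Kg : ℝ) (2 * C) * min (dist u v) 1 := by
    rcases le_total (dist u v) 1 with h | h
    · rw [min_eq_left h]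
      calc a ≤ (Kg : ℝ) * dist u v := ha2
        _ ≤ max (Kg : ℝ) (2 * C) * dist u v := by
            apply mul_le_mul_of_nonneg_right (le_max_left _ _) dist_nonneg
    · rw [min_eq_right h]
      calc a ≤ 2 * C := ha1
        _ ≤ max (Kg : ℝ) (2 * C) * 1 := by rw [mul_one]; exact le_max_right _ _
  have h0a : 0 ≤ a := abs_nonneg _
  have hmax0 : 0 ≤ max (Kg : ℝ) (2 * C) := le_trans Kg.coe_nonneg (le_max_left _ _)
  have hmin0 : 0 ≤ min (dist u v) 1 := le_min dist_nonneg zero_le_one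
  calc (g u - g v) ^ 2 = a * a := hsq
    _ ≤ (2 * C) * (max (Kg : ℝ) (2 * C) * min (dist u v) 1) := by nlinarith
    _ ≤ (2 * C * max (Kg : ℝ) (2 * C) + 1) * min (dist u v) 1 := by nlinarith


end AuxLemmas

set_option maxHeartbeats 1000000 in
/-- Lemma 5 of Section 4: uniform mean-square continuity on compacts.
Under (A1) and (A3), for bounded Lipschitz `g`, a compact `K ⊆ X` and `T ∈ (0,∞)`:
for every `ε > 0` there is `δ > 0` such that
`sup_{x ∈ K} ∫∫ (g(u)-g(v))² P_{|t-s|}(u,dv) P_{s∧t}(x,du) < ε` whenever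
`s,t ∈ [0,T]` and `|s - t| < δ`. -/
theorem uniform_mean_square_continuity_on_compacts
    (P : ℝ → X → Measure X) (hP : IsMarkovSemigroup P)
    (γ : ℝ) (hA1 : CondA1 P) (hA3 : CondA3 P γ)
    (g : X → ℝ) (Kg : ℝ≥0) (hLip : LipschitzWith Kg g) (hBd : ∃ C, ∀ x, |g x| ≤ C)
    (K : Set X) (hK : IsCompact K) (T : ℝ) (hT : 0 < T) :
    ∀ ε : ℝ, 0 < ε → ∃ δ : ℝ, 0 < δ ∧
      ∀ s t : ℝ, s ∈ Set.Icc (0 : ℝ) T → t ∈ Set.Icc (0 : ℝ) T → |s - t| < δ →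
        ∀ x ∈ K,
          (∫ u, (∫ v, (g u - g v) ^ 2 ∂(P |t - s| u)) ∂(P (min s t) x)) < ε := by
  intro ε hε
  obtain ⟨C₀, hC₀⟩ := hBd
  set C : ℝ := max C₀ 0 with hCdef
  have hC0 : 0 ≤ C := le_max_right _ _
  have hC : ∀ z, |g z| ≤ C := fun z => (hC₀ z).trans (le_max_left _ _)
  set L : ℝ := 2 * C * max (Kg : ℝ) (2 * C) + 1 with hL
  have hL0 : 0 < L := by
    have : 0 ≤ 2 * C * max (Kg : ℝ) (2 * C) := by
      apply mul_nonneg (by linarith)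
      exact le_trans Kg.coe_nonneg (le_max_left _ _)
    linarith
  obtain ⟨δ, hδ0, hδ⟩ := w_uniform_small hP hA1 hA3 hK hT (by positivity : 0 < ε / L)
  refine ⟨δ, hδ0, ?_⟩
  intro s t hs ht hst x hx
  set r : ℝ := |t - s| with hr
  have hr0 : 0 ≤ r := abs_nonneg _
  have hrδ : r < δ := by rwa [hr, abs_sub_comm]
  set m : ℝ := min s t with hm
  have hm0 : 0 ≤ m := le_min hs.1 ht.1
  have hmT : m ≤ T := (min_le_left s t).trans hs.2
  haveI := hP.prob m hm0 x
  rcases eq_or_lt_of_le hr0 with hr0' | hrpos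
  · -- r = 0 : the inner integral is identically zero
    have hz : ∀ u : X, (∫ v, (g u - g v) ^ 2 ∂(P r u)) = 0 := by
      intro u
      rw [show r = 0 from hr0'.symm, hP.init, integral_dirac]
      simp
    calc (∫ u, (∫ v, (g u - g v) ^ 2 ∂(P r u)) ∂(P m x))
        = ∫ u, (0:ℝ) ∂(P m x) := integral_congr_ae (ae_of_all _ hz)
      _ = 0 := by simp
      _ < ε := hε
  · -- r > 0
    by_cases hInt : Integrable (fun u => ∫ v, (g u - g v) ^ 2 ∂(P r u)) (P m x)
    · have hpt : ∀ u : X, (∫ v, (g u - g v) ^ 2 ∂(P r u)) ≤ L * psiAux P r u := by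
        intro u
        haveI := hP.prob r hr0 u
        have hint1 : Integrable (fun v => (g u - g v) ^ 2) (P r u) := by
          refine integrable_of_bdd ?_ ((2*C)^2) ?_
          · exact ((continuous_const.sub hLip.continuous).pow 2).aestronglyMeasurable
          · intro v
            have h1 := hC u; have h2 := hC v
            rw [abs_of_nonneg (sq_nonneg _)]
            have : |g u - g v| ≤ 2 * C := by
              rw [abs_le]; constructor <;>
                [linarith [(abs_le.mp h1).1, (abs_le.mp h2).2];
                 linarith [(abs_le.mp h1).2, (abs_le.mp h2).1]]
            nlinarith [abs_nonneg (g u - g v), sq_abs (g u - g v)]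
        calc (∫ v, (g u - g v) ^ 2 ∂(P r u))
            ≤ ∫ v, L * min (dist u v) 1 ∂(P r u) :=
              integral_mono hint1 ((integrable_min_dist u).const_mul L)
                (fun v => sq_le_min_bound hLip hC0 hC u v)
          _ = L * psiAux P r u := by rw [psiAux, integral_const_mul]
      have hw := hδ r hrpos hrδ m ⟨hm0, hmT⟩ x hx
      calc (∫ u, (∫ v, (g u - g v) ^ 2 ∂(P r u)) ∂(P m x))
          ≤ ∫ u, L * psiAux P r u ∂(P m x) :=
            integral_mono hInt ((integrable_psi hP hA3 hr0).const_mul L) hpt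
        _ = L * wAux P x m r := by rw [wAux, integral_const_mul]
        _ < L * (ε / L) := by
            apply mul_lt_mul_of_pos_left hw hL0
        _ = ε := by field_simp
    · rw [integral_undef hInt]
      exact hε


end
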